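/- A finite oriented graph (V,E) is strongly connected if and only if its underlying unoriented graph is connected and there exists a flow Q: E → ℝ with Q(x,y) > 0 for every (x,y) ∈ E and div Q(x) = 0 for every vertex x. -/

import Mathlib

open Finset

private def dvg {V : Type*} [Fintype V] (E : V → V → Prop) [DecidableRel E]
    (Q : V → V → ℝ) (x : V) : ℝ :=
  (∑ y ∈ Finset.univ.filter (fun y => E x y), Q x y) -
    (∑ y ∈ Finset.univ.filter (fun y => E y x), Q y x)

private lemma dvg_add {V : Type*} [Fintype V] (E : V → V → Prop) [DecidableRel E]
    (Q R : V → V → ℝ) (x : V) :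
    dvg E (fun u v => Q u v + R u v) x = dvg E Q x + dvg E R x := by
  simp [dvg, Finset.sum_add_distrib]; ring

private lemma dvg_ind {V : Type*} [Fintype V] [DecidableEq V] (E : V → V → Prop)
    [DecidableRel E] {c a : V} (h : E c a) (x : V) :
    dvg E (fun u v => if (u, v) = (c, a) then (1:ℝ) else 0) x
      = (if x = c then 1 else 0) - (if x = a then 1 else 0) := by
  unfold dvg
  congr 1
  · by_cases hx : x = c
    · subst hx
      simp only [Prod.mk.injEq, true_and, if_pos rfl]
      rw [Finset.sum_ite_eq' (Finset.univ.filter (fun y => E x y)) a (fun _ => (1:ℝ))]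
      simp [h]
    · simp only [Prod.mk.injEq, hx, false_and, if_neg, if_false]
      exact Finset.sum_eq_zero fun y _ => by simp [hx]
  · by_cases hx : x = a
    · subst hx
      simp only [Prod.mk.injEq, and_true, if_pos rfl]
      rw [Finset.sum_ite_eq' (Finset.univ.filter (fun y => E y x)) c (fun _ => (1:ℝ))]
      simp [h]
    · simp only [Prod.mk.injEq, hx, and_false, if_neg, if_false]
      exact Finset.sum_eq_zero fun y _ => by simp [hx]

private lemma dvg_sum {V : Type*} [Fintype V] (E : V → V → Prop) [DecidableRel E]
    {ι : Type*} (s : Finset ι) (F : ι → V → V → ℝ) (x : V) :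
    dvg E (fun u v => ∑ p ∈ s, F p u v) x = ∑ p ∈ s, dvg E (F p) x := by
  unfold dvg
  rw [Finset.sum_comm, Finset.sum_comm (s := Finset.univ.filter (fun y => E _ x)),
    ← Finset.sum_sub_distrib]

/-- path flow: nonneg flow with divergence δ_b - δ_a given a path b → a. -/
private lemma pathflow {V : Type*} [Fintype V] [DecidableEq V] {E : V → V → Prop}
    [DecidableRel E] {b a : V} (h : Relation.ReflTransGen E b a) :
    ∃ Q : V → V → ℝ, (∀ u v, 0 ≤ Q u v) ∧
      ∀ x, dvg E Q x = (if x = b then 1 else 0) - (if x = a then 1 else 0) := by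
  induction h with
  | refl => exact ⟨0, fun _ _ => le_refl 0, fun x => by simp [dvg]⟩
  | @tail c a' hbc hca ih =>
      obtain ⟨Q, hQ0, hQd⟩ := ih
      refine ⟨fun u v => Q u v + (if (u,v) = (c,a') then 1 else 0), ?_, ?_⟩
      · intro u v; have := hQ0 u v; positivity
      · intro x
        rw [dvg_add, hQd x, dvg_ind E hca x]
        ring

/-- cut lemma: if Q is positive on edges and divergence free, every edge into the
set of vertices reachable from x has its tail reachable from x. -/
private lemma cut_lemma {V : Type*} [Fintype V] (E : V → V → Prop) [DecidableRel E]
    (Q : V → V → ℝ) (hQ : ∀ x y, E x y → 0 < Q x y)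
    (hdiv : ∀ x, (∑ y ∈ Finset.univ.filter (fun y => E x y), Q x y) -
        (∑ y ∈ Finset.univ.filter (fun y => E y x), Q y x) = 0)
    {x y : V} (hyx : E y x) : Relation.ReflTransGen E x y := by
  classical
  by_contra hy
  set p : V → Prop := fun v => Relation.ReflTransGen E x v with hp
  set S := Finset.univ.filter p with hS
  set T := Finset.univ.filter (fun v => ¬ p v) with hT
  have hxS : x ∈ S := by
    simp only [hS, hp, mem_filter, mem_univ, true_and]
    exact Relation.ReflTransGen.refl
  have hyT : y ∈ T := by simp [hT, hp]; exact hy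
  have hclosed : ∀ v ∈ S, ∀ w, E v w → w ∈ S := by
    intro v hv w hvw
    simp only [hS, mem_filter, mem_univ, true_and, hp] at *
    exact hv.tail hvw
  have hsplit : ∀ (f : V → ℝ), ∑ w ∈ Finset.univ, f w = ∑ w ∈ S, f w + ∑ w ∈ T, f w := by
    intro f
    rw [hS, hT, Finset.sum_filter_add_sum_filter_not]
  have hsum0 : ∑ v ∈ S,
      ((∑ w ∈ S, (if E v w then Q v w else 0) + ∑ w ∈ T, (if E v w then Q v w else 0)) -
       (∑ w ∈ S, (if E w v then Q w v else 0) + ∑ w ∈ T, (if E w v then Q w v else 0))) = 0 := by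
    refine Finset.sum_eq_zero fun v _ => ?_
    rw [← hsplit, ← hsplit, ← Finset.sum_filter, ← Finset.sum_filter]
    exact hdiv v
  have hB : ∀ v ∈ S, ∑ w ∈ T, (if E v w then Q v w else 0) = 0 := by
    intro v hv
    refine Finset.sum_eq_zero fun w hw => ?_
    by_cases h : E v w
    · exfalso
      have := hclosed v hv w h
      simp only [hS, hT, mem_filter, mem_univ, true_and] at this hw
      exact hw this
    · simp [h]
  have hAC : ∑ v ∈ S, ∑ w ∈ S, (if E v w then Q v w else 0)
      = ∑ v ∈ S, ∑ w ∈ S, (if E w v then Q w v else 0) := Finset.sum_comm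
  have hD : ∑ v ∈ S, ∑ w ∈ T, (if E w v then Q w v else 0) = 0 := by
    have := hsum0
    rw [Finset.sum_sub_distrib, Finset.sum_add_distrib, Finset.sum_add_distrib,
      Finset.sum_congr rfl hB, hAC, Finset.sum_const_zero] at this
    linarith
  have hnn : ∀ (w v : V), (0:ℝ) ≤ (if E w v then Q w v else 0) := by
    intro w v; split
    · exact (hQ w v ‹_›).le
    · exact le_refl 0
  have h1 : (if E y x then Q y x else 0) ≤ ∑ w ∈ T, (if E w x then Q w x else 0) :=
    Finset.single_le_sum (fun w _ => hnn w x) hyT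
  have h2 : ∑ w ∈ T, (if E w x then Q w x else 0)
      ≤ ∑ v ∈ S, ∑ w ∈ T, (if E w v then Q w v else 0) :=
    Finset.single_le_sum (fun v _ => Finset.sum_nonneg fun w _ => hnn w v) hxS
  rw [if_pos hyx] at h1
  have h3 := hQ y x hyx
  linarith

/-- a finite oriented graph is strongly connected iff its
underlying unoriented graph is connected and it carries an everywhere positive
divergence free flow. -/
theorem stmt_4 {V : Type*} [Fintype V] (E : V → V → Prop) [DecidableRel E] :
    (∀ x y, Relation.ReflTransGen E x y) ↔
      ((∀ x y, Relation.ReflTransGen (fun a b => E a b ∨ E b a) x y) ∧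
        ∃ Q : V → V → ℝ, (∀ x y, E x y → 0 < Q x y) ∧
          ∀ x, (∑ y ∈ Finset.univ.filter (fun y => E x y), Q x y) -
              (∑ y ∈ Finset.univ.filter (fun y => E y x), Q y x) = 0) := by
  classical
  constructor
  · intro hsc
    refine ⟨fun x y => Relation.ReflTransGen.mono (fun a b h => Or.inl h) x y (hsc x y), ?_⟩
    have hC : ∀ a b : V, E a b → ∃ C : V → V → ℝ,
        (∀ u v, 0 ≤ C u v) ∧ (1 ≤ C a b) ∧ ∀ x, dvg E C x = 0 := by
      intro a b hab
      obtain ⟨P, hP0, hPd⟩ := pathflow (hsc b a)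
      refine ⟨fun u v => P u v + (if (u,v) = (a,b) then 1 else 0), ?_, ?_, ?_⟩
      · intro u v; have := hP0 u v; positivity
      · have := hP0 a b; simp only [if_pos rfl, if_true]; linarith
      · intro x
        rw [dvg_add, hPd x, dvg_ind E hab x]
        ring
    choose C hC0 hC1 hCd using hC
    set edges := (Finset.univ ×ˢ Finset.univ).filter (fun p : V × V => E p.1 p.2) with he
    refine ⟨fun u v => ∑ p ∈ edges, if h : E p.1 p.2 then C p.1 p.2 h u v else 0, ?_, ?_⟩
    · intro a b hab
      have hmem : (a,b) ∈ edges := by simp [he, hab]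
      have hterm : (1:ℝ) ≤ (if h : E (a,b).1 (a,b).2 then C (a,b).1 (a,b).2 h a b else 0) := by
        rw [dif_pos hab]; exact hC1 a b hab
      have hle := Finset.single_le_sum
        (f := fun p : V × V => if h : E p.1 p.2 then C p.1 p.2 h a b else 0)
        (fun p _ => by
          show (0:ℝ) ≤ (if h : E p.1 p.2 then C p.1 p.2 h a b else 0)
          split
          · exact hC0 _ _ _ a b
          · exact le_refl 0) hmem
      linarith
    · intro x
      show dvg E (fun u v => ∑ p ∈ edges, if h : E p.1 p.2 then C p.1 p.2 h u v else 0) x = 0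
      rw [dvg_sum]
      refine Finset.sum_eq_zero fun p _ => ?_
      by_cases h : E p.1 p.2
      · simp only [dif_pos h]; exact hCd p.1 p.2 h x
      · simp only [dif_neg h]; simp [dvg]
  · rintro ⟨hconn, Q, hQ, hdiv⟩
    intro x y
    have h := hconn x y
    induction h with
    | refl => exact Relation.ReflTransGen.refl
    | tail _ hcd ih =>
        rcases hcd with h | h
        · exact ih.tail h
        · exact ih.trans (cut_lemma E Q hQ hdiv h)
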